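/- Let Z, U be Hilbert spaces, T(t) a strongly continuous semigroup on Z, B : U → Z bounded linear, and G_{τδ} u = ∫_{τ−δ}^{τ} T(τ−s) B u(s) ds the controllability map with Gramian Q_{τδ} = G_{τδ} G*_{τδ}. Suppose G_{τδ} has dense range. Then for every y_0 ∈ Z and z_1 ∈ Z, the controls u_α = G*_{τδ}(α I + Q_{τδ})^{-1}(z_1 − T(δ) y_0) satisfy lim_{α→0+} ( T(δ) y_0 + ∫_{τ−δ}^{τ} T(τ−s) B u_α(s) ds ) = z_1. -/

import Mathlib

open scoped InnerProductSpace Topology MeasureTheory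

/-- If the controllability map G_{τδ} has dense range, then the controls
u_α = G*_{τδ}(αI + Q_{τδ})⁻¹(z₁ − T(δ) y₀) steer the mild solution
T(δ)y₀ + ∫_{τ−δ}^{τ} T(τ−s) B u_α(s) ds to z₁ as α → 0⁺. -/
theorem approximate_steering
    {U Z : Type*} [NormedAddCommGroup U] [InnerProductSpace ℝ U] [CompleteSpace U]
    [NormedAddCommGroup Z] [InnerProductSpace ℝ Z] [CompleteSpace Z]
    (T : ℝ → Z →L[ℝ] Z) (hT0 : T 0 = 1)
    (hTsemi : ∀ t s : ℝ, 0 ≤ t → 0 ≤ s → T (t + s) = (T t) ∘L (T s))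
    (hTcont : ∀ z : Z, ContinuousOn (fun t : ℝ => T t z) (Set.Ici (0 : ℝ)))
    (B : U →L[ℝ] Z) (τ δ : ℝ) (hδ : 0 < δ) (hδτ : δ < τ)
    (G : (MeasureTheory.Lp U 2 (MeasureTheory.volume.restrict (Set.Ioc (τ - δ) τ))) →L[ℝ] Z)
    (hG : ∀ u, G u = ∫ s in Set.Ioc (τ - δ) τ, T (τ - s) (B (u s)))
    (Q : Z →L[ℝ] Z) (hQ : Q = G ∘L ContinuousLinearMap.adjoint G)
    (R : ℝ → Z →L[ℝ] Z)
    (hR : ∀ α : ℝ, 0 < α →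
      (R α) ∘L (α • (1 : Z →L[ℝ] Z) + Q) = 1 ∧ (α • (1 : Z →L[ℝ] Z) + Q) ∘L (R α) = 1)
    (hdense : DenseRange G) (y₀ z₁ : Z) :
    Filter.Tendsto
      (fun α : ℝ =>
        T δ y₀ + ∫ s in Set.Ioc (τ - δ) τ,
          T (τ - s) (B ((ContinuousLinearMap.adjoint G (R α (z₁ - T δ y₀))) s)))
      (𝓝[>] 0) (𝓝 z₁) := by
  set h : Z := z₁ - T δ y₀ with hh
  -- Q is nonnegative
  have hQpos : ∀ z : Z, 0 ≤ ⟪z, Q z⟫_ℝ := by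
    intro z
    rw [hQ]
    simp only [ContinuousLinearMap.comp_apply]
    rw [← ContinuousLinearMap.adjoint_inner_left]
    exact real_inner_self_nonneg
  -- key estimate:  α ‖R α w‖ ≤ ‖w‖
  have hbound : ∀ α : ℝ, 0 < α → ∀ w : Z, α * ‖R α w‖ ≤ ‖w‖ := by
    intro α hα w
    set z : Z := R α w with hz
    have hzw : α • z + Q z = w := by
      have := congrArg (fun A : Z →L[ℝ] Z => A w) (hR α hα).2
      simpa [z, ContinuousLinearMap.comp_apply, ContinuousLinearMap.add_apply,
        ContinuousLinearMap.smul_apply] using this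
    have key : α * ‖z‖ ^ 2 ≤ ‖w‖ * ‖z‖ := by
      have h1 : α * ‖z‖ ^ 2 ≤ ⟪z, w⟫_ℝ := by
        have : ⟪z, w⟫_ℝ = α * ⟪z, z⟫_ℝ + ⟪z, Q z⟫_ℝ := by
          rw [← hzw, inner_add_right, real_inner_smul_right]
        rw [this, real_inner_self_eq_norm_sq]
        nlinarith [hQpos z]
      calc α * ‖z‖ ^ 2 ≤ ⟪z, w⟫_ℝ := h1
        _ ≤ ‖z‖ * ‖w‖ := real_inner_le_norm z w
        _ = ‖w‖ * ‖z‖ := mul_comm _ _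
    rcases eq_or_lt_of_le (norm_nonneg z) with hz0 | hz0
    · rw [← hz0]; simp [norm_nonneg]
    · have := (mul_le_mul_iff_left₀ hz0).1 (by nlinarith : (α * ‖z‖) * ‖z‖ ≤ ‖w‖ * ‖z‖)
      exact this
  -- the range of Q is dense
  have hQdense : Dense (Set.range fun z => Q z) := by
    set K : Submodule ℝ Z := LinearMap.range (Q : Z →ₗ[ℝ] Z) with hK
    have horth : Kᗮ = ⊥ := by
      rw [Submodule.eq_bot_iff]
      intro w hw
      have hGw : ContinuousLinearMap.adjoint G w = 0 := by
        have h1 : ⟪Q w, w⟫_ℝ = 0 := hw (Q w) ⟨w, rfl⟩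
        have h2 : ⟪ContinuousLinearMap.adjoint G w, ContinuousLinearMap.adjoint G w⟫_ℝ = 0 := by
          rw [ContinuousLinearMap.adjoint_inner_left]
          rw [hQ] at h1
          simpa [ContinuousLinearMap.comp_apply, real_inner_comm] using h1
        exact inner_self_eq_zero.1 h2
      have : ∀ u, ⟪G u, w⟫_ℝ = 0 := by
        intro u
        rw [← ContinuousLinearMap.adjoint_inner_right, hGw, inner_zero_right]
      have hwperp : w ∈ (Set.range fun u => G u)ᶜ ∪ {w} := by simp
      -- w ⊥ a dense set, hence w = 0
      have : ∀ z : Z, ⟪z, w⟫_ℝ = 0 := by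
        intro z
        have hcont : Continuous fun z : Z => ⟪z, w⟫_ℝ := continuous_inner.comp
          (Continuous.prodMk continuous_id continuous_const)
        have : Set.EqOn (fun z : Z => ⟪z, w⟫_ℝ) (fun _ => (0 : ℝ)) (Set.range G) := by
          rintro _ ⟨u, rfl⟩; exact ‹∀ u, ⟪G u, w⟫_ℝ = 0› u
        have := Continuous.ext_on hdense hcont continuous_const this
        exact congrFun this z
      exact (inner_self_eq_zero (𝕜 := ℝ)).1 (this w)
    have hclos : K.topologicalClosure = ⊤ := by
      rw [← K.orthogonal_orthogonal_eq_closure, horth, Submodule.bot_orthogonal_eq_top]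
    have : Dense (K : Set Z) := by
      have := congrArg (fun S : Submodule ℝ Z => (S : Set Z)) hclos
      simp only [Submodule.topologicalClosure_coe, Submodule.top_coe] at this
      rw [dense_iff_closure_eq]
      exact this
    simpa [hK, Set.range, LinearMap.coe_range] using this
  -- α • R α h → 0
  have hlim0 : Filter.Tendsto (fun α : ℝ => α • R α h) (𝓝[>] 0) (𝓝 0) := by
    rw [NormedAddCommGroup.tendsto_nhds_zero]
    intro ε hε
    obtain ⟨_, ⟨z, rfl⟩, hdz⟩ := Metric.mem_closure_iff.1 (hQdense.closure_eq ▸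
      Set.mem_univ h : h ∈ closure (Set.range fun z => Q z)) (ε / 2) (by linarith)
    have hdz : ‖h - Q z‖ < ε / 2 := by rwa [dist_eq_norm] at hdz
    have hsmall : ∀ᶠ α in 𝓝[>] (0 : ℝ), α ∈ Set.Ioo (0 : ℝ) (ε / (4 * (‖z‖ + 1))) := by
      apply Ioo_mem_nhdsGT_of_mem
      constructor
      · exact le_refl 0
      · positivity
    filter_upwards [hsmall] with α hα
    obtain ⟨hα0, hαlt⟩ := hα
    -- α • R α h = α • R α (h - Q z) + α • R α (Q z)
    have hsplit : α • R α h = α • R α (h - Q z) + α • R α (Q z) := by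
      rw [← smul_add, ← map_add, sub_add_cancel]
    -- bound first term
    have hb1 : ‖α • R α (h - Q z)‖ ≤ ‖h - Q z‖ := by
      rw [norm_smul, Real.norm_eq_abs, abs_of_pos hα0]
      exact hbound α hα0 _
    -- α • R α (Q z) = α • z - α • (α • R α z)
    have hRQ : α • R α (Q z) = α • z - α • (α • R α z) := by
      have := congrArg (fun A : Z →L[ℝ] Z => A z) (hR α hα0).1
      have h2 : R α (α • z + Q z) = z := by
        simpa [ContinuousLinearMap.comp_apply, ContinuousLinearMap.add_apply,
          ContinuousLinearMap.smul_apply] using this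
      have h3 : α • R α z + R α (Q z) = z := by
        rw [← map_smul, ← map_add]; exact h2
      have h4 : R α (Q z) = z - α • R α z := by
        rw [eq_sub_iff_add_eq, add_comm]; exact h3
      rw [h4, smul_sub]
    have hb2 : ‖α • R α (Q z)‖ ≤ 2 * (α * ‖z‖) := by
      rw [hRQ]
      calc ‖α • z - α • (α • R α z)‖ ≤ ‖α • z‖ + ‖α • (α • R α z)‖ := norm_sub_le _ _
        _ ≤ α * ‖z‖ + α * ‖z‖ := by
            gcongr
            · rw [norm_smul, Real.norm_eq_abs, abs_of_pos hα0]
            · rw [norm_smul, Real.norm_eq_abs, abs_of_pos hα0]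
              have := hbound α hα0 z
              calc α * ‖α • R α z‖ = α * (α * ‖R α z‖) := by
                    rw [norm_smul, Real.norm_eq_abs, abs_of_pos hα0]
                _ ≤ α * ‖z‖ := by
                    apply mul_le_mul_of_nonneg_left this hα0.le
        _ = 2 * (α * ‖z‖) := by ring
    have hαz : 2 * (α * ‖z‖) < ε / 2 := by
      have hz1 : ‖z‖ < ‖z‖ + 1 := by linarith
      have : α * ‖z‖ < ε / (4 * (‖z‖ + 1)) * (‖z‖ + 1) := by
        apply mul_lt_mul' hαlt.le hz1 (norm_nonneg z)
        positivity
      have heq : ε / (4 * (‖z‖ + 1)) * (‖z‖ + 1) = ε / 4 := by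
        field_simp
      rw [heq] at this
      linarith
    calc ‖α • R α h‖ = ‖α • R α (h - Q z) + α • R α (Q z)‖ := by rw [← hsplit]
      _ ≤ ‖α • R α (h - Q z)‖ + ‖α • R α (Q z)‖ := norm_add_le _ _
      _ < ε / 2 + ε / 2 := by
          apply add_lt_add_of_le_of_lt (hb1.trans hdz.le)
          exact lt_of_le_of_lt hb2 hαz
      _ = ε := by ring
  -- rewrite the function
  have heq : ∀ᶠ α in 𝓝[>] (0 : ℝ),
      (T δ y₀ + ∫ s in Set.Ioc (τ - δ) τ,
        T (τ - s) (B ((ContinuousLinearMap.adjoint G (R α h)) s)))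
      = T δ y₀ + (h - α • R α h) := by
    filter_upwards [self_mem_nhdsWithin] with α (hα : (0:ℝ) < α)
    have h1 : (∫ s in Set.Ioc (τ - δ) τ,
        T (τ - s) (B ((ContinuousLinearMap.adjoint G (R α h)) s)))
        = G (ContinuousLinearMap.adjoint G (R α h)) := (hG _).symm
    have h2 : G (ContinuousLinearMap.adjoint G (R α h)) = Q (R α h) := by
      rw [hQ, ContinuousLinearMap.comp_apply]
    have h3 : α • R α h + Q (R α h) = h := by
      have h5 := congrArg (fun A : Z →L[ℝ] Z => A h) (hR α hα).2
      simp only [ContinuousLinearMap.comp_apply, ContinuousLinearMap.add_apply,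
        ContinuousLinearMap.smul_apply, ContinuousLinearMap.one_apply] at h5
      exact h5
    rw [h1, h2]
    congr 1
    rw [eq_sub_iff_add_eq, add_comm]
    exact h3
  rw [Filter.tendsto_congr' heq]
  have : Filter.Tendsto (fun α : ℝ => T δ y₀ + (h - α • R α h)) (𝓝[>] 0)
      (𝓝 (T δ y₀ + (h - 0))) :=
    Filter.Tendsto.add tendsto_const_nhds (Filter.Tendsto.sub tendsto_const_nhds hlim0)
  simpa [hh] using this
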